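/- Let c₀ ∈ ℝ, δ', δ'' > 0 and A', A'' > 0. Let φ̂ be holomorphic on the half-strip S_{δ'} = {ζ ∈ ℂ : dist(ζ, ℝ≥0) < δ'} with |φ̂(ζ)| ≤ A'·e^{c₀|ζ|} there, and let ψ̂ be holomorphic on S_{δ''} with |ψ̂(ζ)| ≤ A''·e^{c₀|ζ|} there. Set δ := min(δ', δ''). Then the convolution χ(ζ) := ∫₀^1 ζ·φ̂(sζ)·ψ̂((1−s)ζ) ds is holomorphic on S_δ and satisfies |χ(ζ)| ≤ A'·A''·|ζ|·e^{c₀|ζ|} for all ζ ∈ S_δ; moreover, for every z ∈ ℂ with Re z > c₀, ∫₀^{+∞} e^{−zζ} χ(ζ) dζ = (∫₀^{+∞} e^{−zζ} φ̂(ζ) dζ)·(∫₀^{+∞} e^{−zζ} ψ̂(ζ) dζ). -/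

import Mathlib

open MeasureTheory

/-- The half-strip `S_δ = {ζ ∈ ℂ : dist(ζ, ℝ≥0) < δ}`. -/
def halfStrip (δ : ℝ) : Set ℂ :=
  {ζ : ℂ | Metric.infDist ζ (Complex.ofReal '' Set.Ici (0 : ℝ)) < δ}

lemma posReals_nonempty : (Complex.ofReal '' Set.Ici (0:ℝ)).Nonempty :=
  ⟨0, ⟨0, Set.mem_Ici.2 (le_refl 0), by simp⟩⟩

lemma isOpen_halfStrip (δ : ℝ) : IsOpen (halfStrip δ) :=
  isOpen_Iio.preimage (Metric.continuous_infDist_pt _)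

lemma halfStrip_mono {δ₁ δ₂ : ℝ} (h : δ₁ ≤ δ₂) : halfStrip δ₁ ⊆ halfStrip δ₂ :=
  fun _ hζ => lt_of_lt_of_le hζ h

lemma smul_mem_halfStrip {δ : ℝ} {ζ : ℂ} (hζ : ζ ∈ halfStrip δ) {s : ℝ}
    (h0 : 0 ≤ s) (h1 : s ≤ 1) : (s:ℂ) * ζ ∈ halfStrip δ := by
  obtain ⟨y, ⟨r, hr, rfl⟩, hd⟩ := (Metric.infDist_lt_iff posReals_nonempty).mp hζ
  refine lt_of_le_of_lt (Metric.infDist_le_dist_of_mem (y := ((s*r : ℝ) : ℂ)) ?_) ?_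
  · exact ⟨s*r, Set.mem_Ici.2 (mul_nonneg h0 (Set.mem_Ici.1 hr)), rfl⟩
  · have : dist ((s:ℂ) * ζ) ((s*r : ℝ) : ℂ) = s * dist ζ (r:ℂ) := by
      rw [dist_eq_norm, dist_eq_norm]
      have : (s:ℂ) * ζ - ((s*r:ℝ):ℂ) = (s:ℂ) * (ζ - (r:ℂ)) := by push_cast; ring
      rw [this, norm_mul, Complex.norm_real, Real.norm_eq_abs, abs_of_nonneg h0]
    rw [this]
    calc s * dist ζ (r:ℂ) ≤ 1 * dist ζ (r:ℂ) := by
          apply mul_le_mul_of_nonneg_right h1 dist_nonneg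
      _ = dist ζ (r:ℂ) := one_mul _
      _ < δ := hd

lemma ofReal_mem_halfStrip {δ : ℝ} (hδ : 0 < δ) {t : ℝ} (ht : 0 ≤ t) :
    (t:ℂ) ∈ halfStrip δ := by
  show Metric.infDist _ _ < δ
  refine lt_of_le_of_lt (Metric.infDist_le_dist_of_mem (y := (t:ℂ)) ⟨t, Set.mem_Ici.2 ht, rfl⟩) ?_
  simpa using hδ

lemma norm_mul3_le {x a b : ℂ} {X A B : ℝ} (hX : ‖x‖ ≤ X) (hA : ‖a‖ ≤ A) (hB : ‖b‖ ≤ B) :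
    ‖x*a*b‖ ≤ X*A*B := by
  rw [norm_mul, norm_mul]
  exact mul_le_mul (mul_le_mul hX hA (norm_nonneg _) ((norm_nonneg x).trans hX)) hB
    (norm_nonneg _) (mul_nonneg ((norm_nonneg _).trans hX) ((norm_nonneg _).trans hA))

lemma conv_integrand_bound {c₀ δ' δ'' A' A'' : ℝ} {φhat ψhat : ℂ → ℂ}
    (hφbd : ∀ ζ ∈ halfStrip δ', ‖φhat ζ‖ ≤ A' * Real.exp (c₀ * ‖ζ‖))
    (hψbd : ∀ ζ ∈ halfStrip δ'', ‖ψhat ζ‖ ≤ A'' * Real.exp (c₀ * ‖ζ‖))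
    {ζ : ℂ} (hζ : ζ ∈ halfStrip (min δ' δ'')) {s : ℝ} (h0 : 0 ≤ s) (h1 : s ≤ 1) :
    ‖ζ * φhat ((s:ℂ) * ζ) * ψhat ((1 - (s:ℂ)) * ζ)‖ ≤
      A' * A'' * ‖ζ‖ * Real.exp (c₀ * ‖ζ‖) := by
  have hm1 : (s:ℂ) * ζ ∈ halfStrip δ' :=
    halfStrip_mono (min_le_left _ _) (smul_mem_halfStrip hζ h0 h1)
  have hcast : (1 - (s:ℂ)) * ζ = (((1-s):ℝ):ℂ) * ζ := by push_cast; ring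
  have hm2 : (1 - (s:ℂ)) * ζ ∈ halfStrip δ'' := by
    rw [hcast]
    exact halfStrip_mono (min_le_right _ _)
      (smul_mem_halfStrip hζ (by linarith) (by linarith))
  have n1 : ‖(s:ℂ) * ζ‖ = s * ‖ζ‖ := by
    rw [norm_mul, Complex.norm_real, Real.norm_eq_abs, abs_of_nonneg h0]
  have n2 : ‖(1 - (s:ℂ)) * ζ‖ = (1-s) * ‖ζ‖ := by
    rw [hcast, norm_mul, Complex.norm_real, Real.norm_eq_abs, abs_of_nonneg (by linarith)]
  have bφ := hφbd _ hm1
  have bψ := hψbd _ hm2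
  rw [n1] at bφ; rw [n2] at bψ
  calc ‖ζ * φhat ((s:ℂ) * ζ) * ψhat ((1 - (s:ℂ)) * ζ)‖
      ≤ ‖ζ‖ * (A' * Real.exp (c₀ * (s * ‖ζ‖))) * (A'' * Real.exp (c₀ * ((1-s) * ‖ζ‖))) :=
        norm_mul3_le le_rfl bφ bψ
    _ = A' * A'' * ‖ζ‖ * Real.exp (c₀ * ‖ζ‖) := by
        rw [show c₀*‖ζ‖ = c₀*(s*‖ζ‖) + c₀*((1-s)*‖ζ‖) by ring, Real.exp_add]
        ring

lemma one_sub_cast (s : ℝ) (x : ℂ) : (1 - (s:ℂ)) * x = (((1-s):ℝ):ℂ) * x := by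
  push_cast; ring

lemma conv_diff {δ' δ'' : ℝ} {φhat ψhat : ℂ → ℂ}
    (hφ : DifferentiableOn ℂ φhat (halfStrip δ'))
    (hψ : DifferentiableOn ℂ ψhat (halfStrip δ'')) :
    DifferentiableOn ℂ
      (fun ζ : ℂ => ∫ s in (0:ℝ)..1, ζ * φhat ((s : ℂ) * ζ) * ψhat ((1 - (s : ℂ)) * ζ))
      (halfStrip (min δ' δ'')) := by
  have hopen := isOpen_halfStrip (min δ' δ'')
  have hrw : (fun ζ : ℂ => ∫ s in (0:ℝ)..1, ζ * φhat ((s : ℂ) * ζ) * ψhat ((1 - (s : ℂ)) * ζ))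
      = fun ζ : ℂ => ∫ s in Set.Ioc (0:ℝ) 1, ζ * φhat ((s : ℂ) * ζ) * ψhat ((1 - (s : ℂ)) * ζ) :=
    funext fun ζ => intervalIntegral.integral_of_le zero_le_one
  rw [hrw]
  -- membership helpers
  have memφ : ∀ x ∈ halfStrip (min δ' δ''), ∀ s ∈ Set.Icc (0:ℝ) 1,
      (s:ℂ) * x ∈ halfStrip δ' := fun x hx s hs =>
    halfStrip_mono (min_le_left _ _) (smul_mem_halfStrip hx hs.1 hs.2)
  have memψ : ∀ x ∈ halfStrip (min δ' δ''), ∀ s ∈ Set.Icc (0:ℝ) 1,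
      (1 - (s:ℂ)) * x ∈ halfStrip δ'' := by
    intro x hx s hs
    rw [one_sub_cast]
    exact halfStrip_mono (min_le_right _ _)
      (smul_mem_halfStrip hx (by linarith [hs.2]) (by linarith [hs.1]))
  -- continuity of the derivatives of φhat, ψhat
  have hφ' : ContinuousOn (deriv φhat) (halfStrip δ') :=
    ((hφ.analyticOnNhd (isOpen_halfStrip _)).deriv).continuousOn
  have hψ' : ContinuousOn (deriv ψhat) (halfStrip δ'') :=
    ((hψ.analyticOnNhd (isOpen_halfStrip _)).deriv).continuousOn
  -- composed continuity helpers
  have contφ : ∀ x ∈ halfStrip (min δ' δ''),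
      ContinuousOn (fun s : ℝ => φhat ((s:ℂ) * x)) (Set.Icc 0 1) := fun x hx =>
    hφ.continuousOn.comp ((Complex.continuous_ofReal.mul continuous_const).continuousOn)
      (memφ x hx)
  have contψ : ∀ x ∈ halfStrip (min δ' δ''),
      ContinuousOn (fun s : ℝ => ψhat ((1 - (s:ℂ)) * x)) (Set.Icc 0 1) := fun x hx =>
    hψ.continuousOn.comp
      (((continuous_const.sub Complex.continuous_ofReal).mul continuous_const).continuousOn)
      (memψ x hx)
  have contφd : ∀ x ∈ halfStrip (min δ' δ''),
      ContinuousOn (fun s : ℝ => deriv φhat ((s:ℂ) * x)) (Set.Icc 0 1) := fun x hx =>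
    hφ'.comp ((Complex.continuous_ofReal.mul continuous_const).continuousOn) (memφ x hx)
  have contψd : ∀ x ∈ halfStrip (min δ' δ''),
      ContinuousOn (fun s : ℝ => deriv ψhat ((1 - (s:ℂ)) * x)) (Set.Icc 0 1) := fun x hx =>
    hψ'.comp
      (((continuous_const.sub Complex.continuous_ofReal).mul continuous_const).continuousOn)
      (memψ x hx)
  intro ζ₀ hζ₀
  obtain ⟨r, hr, hball⟩ := Metric.isOpen_iff.mp hopen ζ₀ hζ₀
  have hεpos : 0 < r/2 := by positivity
  have hcb : Metric.closedBall ζ₀ (r/2) ⊆ halfStrip (min δ' δ'') :=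
    (Metric.closedBall_subset_ball (by linarith)).trans hball
  set K : Set ℂ := (fun p : ℝ × ℂ => (p.1:ℂ) * p.2) ''
    (Set.Icc (0:ℝ) 1 ×ˢ Metric.closedBall ζ₀ (r/2)) with hKdef
  have hKc : IsCompact K := (isCompact_Icc.prod (isCompact_closedBall _ _)).image (by fun_prop)
  have hmemK : ∀ s : ℝ, s ∈ Set.Icc (0:ℝ) 1 → ∀ x ∈ Metric.closedBall ζ₀ (r/2),
      (s:ℂ) * x ∈ K := fun s hs x hx => ⟨(s, x), ⟨hs, hx⟩, rfl⟩
  have hKsub : K ⊆ halfStrip (min δ' δ'') := by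
    rintro w ⟨⟨s, x⟩, ⟨hs, hx⟩, rfl⟩
    exact smul_mem_halfStrip (hcb hx) hs.1 hs.2
  have hKφ : K ⊆ halfStrip δ' := hKsub.trans (halfStrip_mono (min_le_left _ _))
  have hKψ : K ⊆ halfStrip δ'' := hKsub.trans (halfStrip_mono (min_le_right _ _))
  obtain ⟨Mφ, hMφ⟩ := hKc.exists_bound_of_continuousOn (hφ.continuousOn.mono hKφ)
  obtain ⟨Mφd, hMφd⟩ := hKc.exists_bound_of_continuousOn (hφ'.mono hKφ)
  obtain ⟨Mψ, hMψ⟩ := hKc.exists_bound_of_continuousOn (hψ.continuousOn.mono hKψ)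
  obtain ⟨Mψd, hMψd⟩ := hKc.exists_bound_of_continuousOn (hψ'.mono hKψ)
  have hζ₀K : ζ₀ ∈ K :=
    ⟨(1, ζ₀), ⟨⟨zero_le_one, le_rfl⟩, Metric.mem_closedBall_self hεpos.le⟩, by simp⟩
  have hMφ0 : 0 ≤ Mφ := le_trans (norm_nonneg _) (hMφ _ hζ₀K)
  have hMφd0 : 0 ≤ Mφd := le_trans (norm_nonneg _) (hMφd _ hζ₀K)
  have hMψ0 : 0 ≤ Mψ := le_trans (norm_nonneg _) (hMψ _ hζ₀K)
  have hMψd0 : 0 ≤ Mψd := le_trans (norm_nonneg _) (hMψd _ hζ₀K)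
  -- memberships in K for points in the ball
  have hK1 : ∀ s ∈ Set.Icc (0:ℝ) 1, ∀ x ∈ Metric.ball ζ₀ (r/2), (s:ℂ) * x ∈ K :=
    fun s hs x hx => hmemK s hs x (Metric.ball_subset_closedBall hx)
  have hK2 : ∀ s ∈ Set.Icc (0:ℝ) 1, ∀ x ∈ Metric.ball ζ₀ (r/2), (1 - (s:ℂ)) * x ∈ K := by
    intro s hs x hx
    rw [one_sub_cast]
    exact hmemK (1-s) ⟨by linarith [hs.2], by linarith [hs.1]⟩ x
      (Metric.ball_subset_closedBall hx)
  have hnormball : ∀ x ∈ Metric.ball ζ₀ (r/2), ‖x‖ ≤ ‖ζ₀‖ + r/2 := by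
    intro x hx
    have : ‖x - ζ₀‖ < r/2 := by rw [← dist_eq_norm]; exact Metric.mem_ball.mp hx
    calc ‖x‖ = ‖ζ₀ + (x - ζ₀)‖ := by ring_nf
      _ ≤ ‖ζ₀‖ + ‖x - ζ₀‖ := norm_add_le _ _
      _ ≤ ‖ζ₀‖ + r/2 := by linarith
  -- the derivative in ζ
  set F' : ℂ → ℝ → ℂ := fun ζ s =>
    φhat ((s:ℂ)*ζ) * ψhat ((1-(s:ℂ))*ζ) +
      ζ * ((s:ℂ) * deriv φhat ((s:ℂ)*ζ) * ψhat ((1-(s:ℂ))*ζ) +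
        (1-(s:ℂ)) * φhat ((s:ℂ)*ζ) * deriv ψhat ((1-(s:ℂ))*ζ)) with hF'def
  have key := hasDerivAt_integral_of_dominated_loc_of_deriv_le (μ := volume.restrict (Set.Ioc (0:ℝ) 1))
    (F := fun ζ s => ζ * φhat ((s : ℂ) * ζ) * ψhat ((1 - (s : ℂ)) * ζ))
    (F' := F') (x₀ := ζ₀)
    (bound := fun _ : ℝ => Mφ*Mψ + (‖ζ₀‖ + r/2) * (Mφd*Mψ + Mφ*Mψd)) (Metric.ball_mem_nhds ζ₀ hεpos)
    ?_ ?_ ?_ ?_ ?_ ?_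
  · exact key.2.differentiableAt.differentiableWithinAt
  · -- hF_meas
    filter_upwards [hopen.mem_nhds hζ₀] with x hx
    exact (((continuousOn_const.mul (contφ x hx)).mul (contψ x hx)).mono
      Set.Ioc_subset_Icc_self).aestronglyMeasurable measurableSet_Ioc
  · -- hF_int
    refine ⟨(((continuousOn_const.mul (contφ ζ₀ hζ₀)).mul (contψ ζ₀ hζ₀)).mono
      Set.Ioc_subset_Icc_self).aestronglyMeasurable measurableSet_Ioc, ?_⟩
    apply HasFiniteIntegral.restrict_of_bounded (C := ‖ζ₀‖ * Mφ * Mψ) measure_Ioc_lt_top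
    refine (ae_restrict_iff' measurableSet_Ioc).2 (ae_of_all _ fun s hs => ?_)
    have hsI : s ∈ Set.Icc (0:ℝ) 1 := Set.Ioc_subset_Icc_self hs
    have k2 : (1 - (s:ℂ)) * ζ₀ ∈ K := by
      rw [one_sub_cast]
      exact hmemK (1-s) ⟨by linarith [hsI.2], by linarith [hsI.1]⟩ ζ₀
        (Metric.mem_closedBall_self hεpos.le)
    exact norm_mul3_le le_rfl
      (hMφ _ (hmemK s hsI ζ₀ (Metric.mem_closedBall_self hεpos.le))) (hMψ _ k2)
  · -- hF'_meas
    refine ContinuousOn.aestronglyMeasurable (ContinuousOn.mono ?_ Set.Ioc_subset_Icc_self)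
      measurableSet_Ioc
    apply ContinuousOn.add
    · exact (contφ ζ₀ hζ₀).mul (contψ ζ₀ hζ₀)
    · apply continuousOn_const.mul
      apply ContinuousOn.add
      · exact (Complex.continuous_ofReal.continuousOn.mul (contφd ζ₀ hζ₀)).mul (contψ ζ₀ hζ₀)
      · exact (((continuous_const.sub Complex.continuous_ofReal).continuousOn.mul
          (contφ ζ₀ hζ₀)).mul (contψd ζ₀ hζ₀))
  · -- h_bound
    refine (ae_restrict_iff' measurableSet_Ioc).2 (ae_of_all _ fun s hs => ?_)
    intro x hx
    have hsI : s ∈ Set.Icc (0:ℝ) 1 := Set.Ioc_subset_Icc_self hs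
    have k1 := hK1 s hsI x hx
    have k2 := hK2 s hsI x hx
    have hs1 : ‖(s:ℂ)‖ ≤ 1 := by
      rw [Complex.norm_real, Real.norm_eq_abs, abs_of_nonneg hsI.1]; exact hsI.2
    have hs2 : ‖1 - (s:ℂ)‖ ≤ 1 := by
      rw [show (1 - (s:ℂ)) = (((1-s):ℝ):ℂ) by push_cast; ring, Complex.norm_real,
        Real.norm_eq_abs, abs_of_nonneg (by linarith [hsI.2])]
      linarith [hsI.1]
    have hA : ‖(s:ℂ) * deriv φhat ((s:ℂ)*x) * ψhat ((1-(s:ℂ))*x)‖ ≤ Mφd*Mψ := by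
      simpa using norm_mul3_le hs1 (hMφd _ k1) (hMψ _ k2)
    have hB : ‖(1-(s:ℂ)) * φhat ((s:ℂ)*x) * deriv ψhat ((1-(s:ℂ))*x)‖ ≤ Mφ*Mψd := by
      simpa using norm_mul3_le hs2 (hMφ _ k1) (hMψd _ k2)
    calc ‖F' x s‖ ≤ ‖φhat ((s:ℂ)*x) * ψhat ((1-(s:ℂ))*x)‖ +
          ‖x * ((s:ℂ) * deriv φhat ((s:ℂ)*x) * ψhat ((1-(s:ℂ))*x) +
            (1-(s:ℂ)) * φhat ((s:ℂ)*x) * deriv ψhat ((1-(s:ℂ))*x))‖ := norm_add_le _ _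
      _ ≤ Mφ*Mψ + (‖ζ₀‖ + r/2) * (Mφd*Mψ + Mφ*Mψd) := by
          apply add_le_add
          · rw [norm_mul]
            exact mul_le_mul (hMφ _ k1) (hMψ _ k2) (norm_nonneg _) hMφ0
          · rw [norm_mul]
            exact mul_le_mul (hnormball x hx)
              (le_trans (norm_add_le _ _) (add_le_add hA hB)) (norm_nonneg _)
              (le_trans (norm_nonneg x) (hnormball x hx))
  · -- bound integrable
    exact integrable_const _
  · -- h_diff
    refine (ae_restrict_iff' measurableSet_Ioc).2 (ae_of_all _ fun s hs => ?_)
    intro x hx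
    have hsI : s ∈ Set.Icc (0:ℝ) 1 := Set.Ioc_subset_Icc_self hs
    have hxm : x ∈ halfStrip (min δ' δ'') := hball (Metric.ball_subset_ball (by linarith) hx)
    have hdφ : DifferentiableAt ℂ φhat ((s:ℂ)*x) :=
      hφ.differentiableAt ((isOpen_halfStrip δ').mem_nhds (memφ x hxm s hsI))
    have hdψ : DifferentiableAt ℂ ψhat ((1-(s:ℂ))*x) :=
      hψ.differentiableAt ((isOpen_halfStrip δ'').mem_nhds (memψ x hxm s hsI))
    have hlin1 : HasDerivAt (fun y : ℂ => (s:ℂ) * y) ((s:ℂ)) x := by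
      simpa using (hasDerivAt_id x).const_mul ((s:ℂ))
    have hlin2 : HasDerivAt (fun y : ℂ => (1-(s:ℂ)) * y) (1-(s:ℂ)) x := by
      simpa using (hasDerivAt_id x).const_mul ((1-(s:ℂ)))
    have h1 : HasDerivAt (fun y : ℂ => φhat ((s:ℂ)*y)) (deriv φhat ((s:ℂ)*x) * (s:ℂ)) x :=
      HasDerivAt.comp x hdφ.hasDerivAt hlin1
    have h2 : HasDerivAt (fun y : ℂ => ψhat ((1-(s:ℂ))*y))
        (deriv ψhat ((1-(s:ℂ))*x) * (1-(s:ℂ))) x :=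
      HasDerivAt.comp x hdψ.hasDerivAt hlin2
    have := ((hasDerivAt_id x).mul h1).mul h2
    refine this.congr_deriv ?_
    simp only [hF'def, id, Pi.mul_apply]
    ring

lemma laplace_conv {c₀ δ' δ'' A' A'' : ℝ} {φhat ψhat : ℂ → ℂ}
    (hδ' : 0 < δ') (hδ'' : 0 < δ'') (hA' : 0 < A') (hA'' : 0 < A'')
    (hφc : ContinuousOn φhat (halfStrip δ'))
    (hφbd : ∀ ζ ∈ halfStrip δ', ‖φhat ζ‖ ≤ A' * Real.exp (c₀ * ‖ζ‖))
    (hψc : ContinuousOn ψhat (halfStrip δ''))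
    (hψbd : ∀ ζ ∈ halfStrip δ'', ‖ψhat ζ‖ ≤ A'' * Real.exp (c₀ * ‖ζ‖))
    (z : ℂ) (hz : c₀ < z.re) :
    (∫ t in Set.Ioi (0:ℝ), Complex.exp (-z * (t : ℂ)) *
        (∫ s in (0:ℝ)..1,
          (t : ℂ) * φhat ((s : ℂ) * (t : ℂ)) * ψhat ((1 - (s : ℂ)) * (t : ℂ)))) =
      (∫ t in Set.Ioi (0:ℝ), Complex.exp (-z * (t : ℂ)) * φhat (t : ℂ)) *
        (∫ t in Set.Ioi (0:ℝ), Complex.exp (-z * (t : ℂ)) * ψhat (t : ℂ)) := by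
  set a : ℝ := z.re - c₀ with hadef
  have ha : 0 < a := by simp [hadef]; linarith
  set S : Set (ℝ × ℝ) := {p | 0 < p.2 ∧ p.2 ≤ p.1} with hSdef
  set h : ℝ × ℝ → ℂ := fun p =>
    Complex.exp (-z * (p.1 : ℂ)) * φhat (p.2 : ℂ) * ψhat ((p.1 : ℂ) - (p.2 : ℂ)) with hhdef
  set g : ℝ × ℝ → ℂ := S.indicator h with hgdef
  have hS : MeasurableSet S :=
    (measurableSet_lt measurable_const measurable_snd).inter
      (measurableSet_le measurable_snd measurable_fst)
  -- pointwise bound on S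
  have hbd : ∀ p : ℝ × ℝ, p ∈ S → ‖h p‖ ≤ A' * A'' * Real.exp (-a * p.1) := by
    rintro ⟨t, u⟩ ⟨hu, hut⟩
    have h1 : ‖Complex.exp (-z * (t:ℂ))‖ ≤ Real.exp (-z.re * t) := by
      rw [Complex.norm_exp]
      apply le_of_eq; congr 1
      simp [Complex.mul_re]
    have h2 : ‖φhat (u:ℂ)‖ ≤ A' * Real.exp (c₀ * u) := by
      have := hφbd _ (ofReal_mem_halfStrip hδ' hu.le)
      rwa [Complex.norm_real, Real.norm_eq_abs, abs_of_nonneg hu.le] at this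
    have h3 : ‖ψhat ((t:ℂ) - (u:ℂ))‖ ≤ A'' * Real.exp (c₀ * (t - u)) := by
      have hst : ((t:ℂ) - (u:ℂ)) = (((t-u):ℝ):ℂ) := by push_cast; ring
      have hmem : ((t:ℂ) - (u:ℂ)) ∈ halfStrip δ'' := by
        rw [hst]; exact ofReal_mem_halfStrip hδ'' (by simp at hut hu ⊢; linarith)
      have := hψbd _ hmem
      rw [hst, Complex.norm_real, Real.norm_eq_abs,
        abs_of_nonneg (by simp at hut hu ⊢; linarith)] at this
      rwa [hst]
    calc ‖h (t,u)‖ ≤ Real.exp (-z.re * t) * (A' * Real.exp (c₀ * u)) *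
          (A'' * Real.exp (c₀ * (t - u))) := norm_mul3_le h1 h2 h3
      _ = A' * A'' * Real.exp (-a * t) := by
          rw [show (-a * t) = (-z.re * t) + (c₀ * u) + (c₀ * (t - u)) by rw [hadef]; ring,
            Real.exp_add, Real.exp_add]
          ring
  -- continuity of h on S
  have hcont : ContinuousOn h S := by
    apply ContinuousOn.mul
    apply ContinuousOn.mul
    · exact (Complex.continuous_exp.comp
        (continuous_const.mul (Complex.continuous_ofReal.comp continuous_fst))).continuousOn
    · exact hφc.comp (Complex.continuous_ofReal.comp continuous_snd).continuousOn
        (fun p hp => ofReal_mem_halfStrip hδ' hp.1.le)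
    · refine hψc.comp ((Complex.continuous_ofReal.comp continuous_fst).sub
        (Complex.continuous_ofReal.comp continuous_snd)).continuousOn (fun p hp => ?_)
      have : ((p.1:ℂ) - (p.2:ℂ)) = (((p.1 - p.2):ℝ):ℂ) := by push_cast; ring
      rw [this]
      exact ofReal_mem_halfStrip hδ'' (by linarith [hp.2])
  have hgmeas : AEStronglyMeasurable g (volume.prod volume) :=
    (aestronglyMeasurable_indicator_iff hS).2 (hcont.aestronglyMeasurable hS)
  -- slice description for t > 0
  have hgt : ∀ t : ℝ, 0 < t →
      (fun u => g (t, u)) = (Set.Ioc (0:ℝ) t).indicator (fun u => h (t, u)) := by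
    intro t ht
    funext u
    by_cases hu : u ∈ Set.Ioc (0:ℝ) t
    · rw [Set.indicator_of_mem hu]
      exact Set.indicator_of_mem (show (t,u) ∈ S from ⟨hu.1, hu.2⟩) h
    · rw [Set.indicator_of_notMem hu]
      exact Set.indicator_of_notMem (fun hm : (t,u) ∈ S => hu ⟨hm.1, hm.2⟩) h
  have hgt0 : ∀ t : ℝ, t ≤ 0 → (fun u => g (t, u)) = 0 := by
    intro t ht
    funext u
    exact Set.indicator_of_notMem (fun hm => absurd (hm.1.trans_le hm.2) (not_lt.2 ht)) _
  -- integrability of g on the product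
  have hgint : Integrable g (volume.prod volume) := by
    refine (integrable_prod_iff hgmeas).2 ⟨ae_of_all _ fun t => ?_, ?_⟩
    · rcases le_or_gt t 0 with ht | ht
      · rw [hgt0 t ht]; exact integrable_zero _ _ _
      · rw [hgt t ht]
        apply MeasureTheory.IntegrableOn.integrable_indicator _ measurableSet_Ioc
        refine ⟨(hcont.comp (Continuous.continuousOn (by fun_prop))
            (fun u hu => ⟨hu.1, hu.2⟩)).aestronglyMeasurable measurableSet_Ioc, ?_⟩
        apply HasFiniteIntegral.restrict_of_bounded (C := A' * A'' * Real.exp (-a * t))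
          measure_Ioc_lt_top
        exact (ae_restrict_iff' measurableSet_Ioc).2
          (ae_of_all _ fun u hu => hbd (t, u) ⟨hu.1, hu.2⟩)
    · have hmeasN : AEStronglyMeasurable (fun t => ∫ u, ‖g (t, u)‖) volume :=
        hgmeas.norm.integral_prod_right'
      refine Integrable.mono' (g := fun t => (Set.Ioi (0:ℝ)).indicator
        (fun t => (A' * A'' * (2/a)) * Real.exp (-(a/2) * t)) t) ?_ hmeasN (ae_of_all _ fun t => ?_)
      · rw [integrable_indicator_iff measurableSet_Ioi]
        exact ((exp_neg_integrableOn_Ioi 0 (half_pos ha)).const_mul _)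
      · have h2a : (0:ℝ) ≤ 2/a := div_nonneg (by norm_num) ha.le
        show _ ≤ (Set.Ioi (0:ℝ)).indicator
          (fun t => (A' * A'' * (2/a)) * Real.exp (-(a/2) * t)) t
        rcases le_or_gt t 0 with ht | ht
        · have hz0 : ∀ u : ℝ, g (t, u) = 0 := fun u => congrFun (hgt0 t ht) u
          simp only [hz0, norm_zero, integral_zero, norm_zero]
          apply Set.indicator_nonneg
          intro x _
          exact mul_nonneg (mul_nonneg (mul_nonneg hA'.le hA''.le) h2a) (Real.exp_nonneg _)
        · have hptw : ∀ u : ℝ, g (t, u)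
              = (Set.Ioc (0:ℝ) t).indicator (fun u => h (t, u)) u :=
            fun u => congrFun (hgt t ht) u
          rw [Set.indicator_of_mem (Set.mem_Ioi.2 ht)]
          have hval : (∫ u, ‖g (t, u)‖)
              = ∫ u in Set.Ioc (0:ℝ) t, ‖h (t, u)‖ := by
            simp_rw [hptw, norm_indicator_eq_indicator_norm]
            exact integral_indicator measurableSet_Ioc
          rw [hval]
          have hintle : (∫ u in Set.Ioc (0:ℝ) t, ‖h (t, u)‖)
              ≤ (A' * A'' * Real.exp (-a * t)) * t := by
            have := norm_setIntegral_le_of_norm_le_const (μ := volume)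
              (s := Set.Ioc (0:ℝ) t) (f := fun u => ‖h (t, u)‖)
              (C := A' * A'' * Real.exp (-a * t)) measure_Ioc_lt_top
              (fun u hu => by rw [norm_norm]; exact hbd (t, u) ⟨hu.1, hu.2⟩)
            rw [Measure.real, Real.volume_Ioc, sub_zero, ENNReal.toReal_ofReal ht.le] at this
            exact (Real.le_norm_self _).trans this
          have htle : t ≤ (2/a) * Real.exp ((a/2) * t) := by
            have h1 : (a/2) * t + 1 ≤ Real.exp ((a/2) * t) := Real.add_one_le_exp _
            have h2 : (a/2) * t ≤ Real.exp ((a/2) * t) := by linarith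
            calc t = (2/a) * ((a/2) * t) := by field_simp
              _ ≤ (2/a) * Real.exp ((a/2) * t) := mul_le_mul_of_nonneg_left h2 h2a
          have hnn : 0 ≤ ∫ u in Set.Ioc (0:ℝ) t, ‖h (t, u)‖ :=
            integral_nonneg fun u => norm_nonneg _
          rw [Real.norm_eq_abs, abs_of_nonneg hnn]
          calc (∫ u in Set.Ioc (0:ℝ) t, ‖h (t, u)‖)
              ≤ (A' * A'' * Real.exp (-a * t)) * t := hintle
            _ ≤ (A' * A'' * Real.exp (-a * t)) * ((2/a) * Real.exp ((a/2) * t)) :=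
                mul_le_mul_of_nonneg_left htle (by positivity)
            _ = A' * A'' * (2/a) * Real.exp (-(a/2) * t) := by
                rw [show (-(a/2) * t) = (-a * t) + ((a/2) * t) by ring, Real.exp_add]
                ring
  -- step 1: pointwise rewrite of the integrand on `Ioi 0`
  have step1 : ∀ t ∈ Set.Ioi (0:ℝ),
      Complex.exp (-z * (t:ℂ)) * (∫ s in (0:ℝ)..1,
        (t:ℂ) * φhat ((s:ℂ) * (t:ℂ)) * ψhat ((1 - (s:ℂ)) * (t:ℂ)))
      = ∫ u : ℝ, g (t, u) := by
    intro t ht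
    have ht' : (0:ℝ) < t := ht
    have e1 : (∫ s in (0:ℝ)..1, (t:ℂ) * φhat ((s:ℂ)*(t:ℂ)) * ψhat ((1-(s:ℂ))*(t:ℂ)))
        = ∫ u in (0:ℝ)..t, φhat ((u:ℂ)) * ψhat ((t:ℂ) - (u:ℂ)) := by
      have heq : Set.EqOn (fun s : ℝ => (t:ℂ) * φhat ((s:ℂ)*(t:ℂ)) * ψhat ((1-(s:ℂ))*(t:ℂ)))
          (fun s : ℝ => t • (fun u : ℝ => φhat ((u:ℂ)) * ψhat ((t:ℂ) - (u:ℂ))) (s * t))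
          (Set.uIcc 0 1) := by
        intro s _
        show (t:ℂ) * φhat ((s:ℂ)*(t:ℂ)) * ψhat ((1-(s:ℂ))*(t:ℂ))
          = t • (φhat (((s*t : ℝ) : ℝ):ℂ) * ψhat ((t:ℂ) - (((s*t : ℝ) : ℝ):ℂ)))
        rw [Complex.real_smul]
        rw [show (((s*t : ℝ) : ℝ):ℂ) = (s:ℂ) * (t:ℂ) by push_cast; ring,
          show (t:ℂ) - (s:ℂ) * (t:ℂ) = (1 - (s:ℂ)) * (t:ℂ) by ring]
        ring
      rw [intervalIntegral.integral_congr heq, intervalIntegral.integral_smul,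
        intervalIntegral.smul_integral_comp_mul_right
          (fun u : ℝ => φhat ((u:ℂ)) * ψhat ((t:ℂ) - (u:ℂ))) t]
      norm_num
    rw [e1, ← intervalIntegral.integral_const_mul, intervalIntegral.integral_of_le ht'.le]
    have hptw : ∀ u : ℝ, g (t, u) = (Set.Ioc (0:ℝ) t).indicator (fun u => h (t,u)) u :=
      fun u => congrFun (hgt t ht') u
    simp_rw [hptw]
    rw [integral_indicator measurableSet_Ioc]
    refine setIntegral_congr_fun measurableSet_Ioc (fun u _ => ?_)
    simp only [hhdef]
    ring
  -- step 2: extend to all of ℝ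
  have hext : (∫ t in Set.Ioi (0:ℝ), ∫ u : ℝ, g (t, u)) = ∫ t : ℝ, ∫ u : ℝ, g (t, u) := by
    refine setIntegral_eq_integral_of_forall_compl_eq_zero (fun t ht => ?_)
    rw [hgt0 t (not_lt.1 (by simpa using ht))]
    exact integral_zero _ _
  -- step 3: Fubini
  have hswap : (∫ t : ℝ, ∫ u : ℝ, g (t, u)) = ∫ u : ℝ, ∫ t : ℝ, g (t, u) := by
    have hu : Integrable (Function.uncurry fun t u => g (t, u)) (volume.prod volume) := by
      exact hgint
    exact integral_integral_swap hu
  -- step 4: evaluate the inner integral in `t`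
  have hpt : ∀ u : ℝ, (∫ t : ℝ, g (t, u)) = (Set.Ioi (0:ℝ)).indicator
      (fun u => Complex.exp (-z*(u:ℂ)) * φhat (u:ℂ) *
        (∫ t in Set.Ioi (0:ℝ), Complex.exp (-z*(t:ℂ)) * ψhat (t:ℂ))) u := by
    intro u
    rcases le_or_gt u 0 with hu | hu
    · have hz0 : ∀ t : ℝ, g (t, u) = 0 :=
        fun t => Set.indicator_of_notMem
          (fun hm : (t, u) ∈ S => absurd hm.1 (not_lt.2 hu)) _
      simp_rw [hz0]
      rw [integral_zero, Set.indicator_of_notMem (by simpa using hu)]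
    · rw [Set.indicator_of_mem (Set.mem_Ioi.2 hu)]
      have hfun : ∀ t : ℝ, g (t, u) = (Set.Ici u).indicator (fun t => h (t, u)) t := by
        intro t
        by_cases htu : u ≤ t
        · rw [Set.indicator_of_mem (Set.mem_Ici.2 htu)]
          exact Set.indicator_of_mem (show (t, u) ∈ S from ⟨hu, htu⟩) h
        · rw [Set.indicator_of_notMem (fun hm => htu (Set.mem_Ici.1 hm))]
          exact Set.indicator_of_notMem (fun hm : (t, u) ∈ S => htu hm.2) h
      simp_rw [hfun]
      rw [integral_indicator measurableSet_Ici, integral_Ici_eq_integral_Ioi]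
      have hmp := measurePreserving_add_right (volume : Measure ℝ) u
      have hemb : MeasurableEmbedding (fun v : ℝ => v + u) :=
        (Homeomorph.addRight u).measurableEmbedding
      have himg : (fun v : ℝ => v + u) '' Set.Ioi (0:ℝ) = Set.Ioi u := by
        rw [Set.image_add_const_Ioi]; simp
      rw [← himg, hmp.setIntegral_image_emb hemb]
      have hcong : ∀ v ∈ Set.Ioi (0:ℝ), h (v + u, u)
          = (Complex.exp (-z*(u:ℂ)) * φhat (u:ℂ)) *
            (Complex.exp (-z*(v:ℂ)) * ψhat (v:ℂ)) := by
        intro v _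
        simp only [hhdef]
        rw [show (((v+u : ℝ)):ℂ) - (u:ℂ) = (v:ℂ) by push_cast; ring,
          show -z * (((v+u:ℝ)):ℂ) = -z * (u:ℂ) + -z * (v:ℂ) by push_cast; ring,
          Complex.exp_add]
        ring
      rw [setIntegral_congr_fun measurableSet_Ioi hcong, integral_const_mul]
  calc (∫ t in Set.Ioi (0:ℝ), Complex.exp (-z * (t:ℂ)) * (∫ s in (0:ℝ)..1,
          (t:ℂ) * φhat ((s:ℂ) * (t:ℂ)) * ψhat ((1 - (s:ℂ)) * (t:ℂ))))
      = ∫ t in Set.Ioi (0:ℝ), ∫ u : ℝ, g (t, u) :=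
        setIntegral_congr_fun measurableSet_Ioi step1
    _ = ∫ t : ℝ, ∫ u : ℝ, g (t, u) := hext
    _ = ∫ u : ℝ, ∫ t : ℝ, g (t, u) := hswap
    _ = ∫ u : ℝ, (Set.Ioi (0:ℝ)).indicator
          (fun u => Complex.exp (-z*(u:ℂ)) * φhat (u:ℂ) *
            (∫ t in Set.Ioi (0:ℝ), Complex.exp (-z*(t:ℂ)) * ψhat (t:ℂ))) u :=
        integral_congr_ae (.of_forall hpt)
    _ = ∫ u in Set.Ioi (0:ℝ), Complex.exp (-z*(u:ℂ)) * φhat (u:ℂ) *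
          (∫ t in Set.Ioi (0:ℝ), Complex.exp (-z*(t:ℂ)) * ψhat (t:ℂ)) :=
        integral_indicator measurableSet_Ioi
    _ = (∫ t in Set.Ioi (0:ℝ), Complex.exp (-z * (t:ℂ)) * φhat (t:ℂ)) *
          (∫ t in Set.Ioi (0:ℝ), Complex.exp (-z * (t:ℂ)) * ψhat (t:ℂ)) :=
        integral_mul_const _ _

/-- Stability under convolution of functions with exponential growth on half-strips, and
the fact that the Laplace transform along `ℝ⁺` maps convolution to pointwise product. -/
theorem stmt_3 (c₀ δ' δ'' A' A'' : ℝ) (hδ' : 0 < δ') (hδ'' : 0 < δ'')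
    (hA' : 0 < A') (hA'' : 0 < A'') (φhat ψhat : ℂ → ℂ)
    (hφ : DifferentiableOn ℂ φhat (halfStrip δ'))
    (hφbd : ∀ ζ ∈ halfStrip δ', ‖φhat ζ‖ ≤ A' * Real.exp (c₀ * ‖ζ‖))
    (hψ : DifferentiableOn ℂ ψhat (halfStrip δ''))
    (hψbd : ∀ ζ ∈ halfStrip δ'', ‖ψhat ζ‖ ≤ A'' * Real.exp (c₀ * ‖ζ‖)) :
    DifferentiableOn ℂ
        (fun ζ : ℂ => ∫ s in (0:ℝ)..1, ζ * φhat ((s : ℂ) * ζ) * ψhat ((1 - (s : ℂ)) * ζ))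
        (halfStrip (min δ' δ'')) ∧
      (∀ ζ ∈ halfStrip (min δ' δ''),
        ‖∫ s in (0:ℝ)..1, ζ * φhat ((s : ℂ) * ζ) * ψhat ((1 - (s : ℂ)) * ζ)‖ ≤
          A' * A'' * ‖ζ‖ * Real.exp (c₀ * ‖ζ‖)) ∧
      ∀ z : ℂ, c₀ < z.re →
        (∫ t in Set.Ioi (0:ℝ), Complex.exp (-z * (t : ℂ)) *
            (∫ s in (0:ℝ)..1,
              (t : ℂ) * φhat ((s : ℂ) * (t : ℂ)) * ψhat ((1 - (s : ℂ)) * (t : ℂ)))) =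
          (∫ t in Set.Ioi (0:ℝ), Complex.exp (-z * (t : ℂ)) * φhat (t : ℂ)) *
            (∫ t in Set.Ioi (0:ℝ), Complex.exp (-z * (t : ℂ)) * ψhat (t : ℂ)) := by
  refine ⟨conv_diff hφ hψ, fun ζ hζ => ?_, fun z hz =>
    laplace_conv hδ' hδ'' hA' hA'' hφ.continuousOn hφbd hψ.continuousOn hψbd z hz⟩
  have hb := intervalIntegral.norm_integral_le_of_norm_le_const
    (C := A' * A'' * ‖ζ‖ * Real.exp (c₀ * ‖ζ‖)) (a := (0:ℝ)) (b := 1)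
    (f := fun s : ℝ => ζ * φhat ((s : ℂ) * ζ) * ψhat ((1 - (s : ℂ)) * ζ)) ?_
  · simpa using hb
  · intro s hs
    rw [Set.uIoc_of_le zero_le_one] at hs
    exact conv_integrand_bound hφbd hψbd hζ hs.1.le hs.2
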